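/- (Multi-dimensional TQFF) Fix d ≥ 1 and L ≥ 1. For each j = 1, …, d let w_j be an integrable even weight on [−π, π], and let ω_{1,j}, …, ω_{L,j} ∈ [0, π) with nonnegative weights a_{1,j}, …, a_{L,j} be a quadrature rule with trigonometric exactness of degree 2L−1 with respect to w_j. Extend symmetrically by setting ω_{−i,j} = −ω_{i,j} and a_{−i,j} = a_{i,j} for i = 1, …, L. Let S be any subset of the index grid ∏_{j=1}^{d} {−L, …, −1, 1, …, L} containing exactly one element of each antipodal pair {i, −i}. For a multi-index i ∈ S set a_i = ∏_{j=1}^{d} (1/2) a_{i_j, j} and ω_i = (ω_{i_1,1}, …, ω_{i_d,d}). Then for every k ∈ ℕ^d with ‖k‖_∞ ≤ 2L−1: Σ_{i ∈ S} 2 a_i cos(ω_iᵀ k) = ∫_{[−π,π]^d} (∏_{j=1}^{d} w_j(ω^{(j)})) cos(ωᵀ k) dω. -/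

import Mathlib

open scoped Real
open MeasureTheory


lemma integral_ofReal'' {X : Type*} [MeasurableSpace X] (μ : MeasureTheory.Measure X) (f : X → ℝ) :
    ∫ x, ((f x : ℝ) : ℂ) ∂μ = ((∫ x, f x ∂μ : ℝ) : ℂ) := integral_ofReal

lemma aux_odd (w : ℝ → ℝ) (hweven : ∀ x, w (-x) = w x) (m : ℕ) :
    (∫ x in (-π)..π, w x * Real.sin (m * x)) = 0 := by
  have h := intervalIntegral.integral_comp_neg (a := -π) (b := π)
    (fun x => w x * Real.sin (m * x))
  simp only [neg_neg, mul_neg, Real.sin_neg, hweven, mul_neg] at h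
  rw [intervalIntegral.integral_neg] at h
  linarith

lemma aux_1d (w : ℝ → ℝ) (hwint : IntegrableOn w (Set.Icc (-π) π)) (m : ℕ)
    (hweven : ∀ x, w (-x) = w x) :
    (∫ x in Set.Icc (-π) π, (w x : ℂ) * Complex.exp ((((m : ℝ) * x : ℝ)) * Complex.I))
      = ((∫ x in (-π)..π, w x * Real.cos (m * x) : ℝ) : ℂ) := by
  have hπ : (-π : ℝ) ≤ π := by linarith [Real.pi_pos]
  have hcos : IntegrableOn (fun x => w x * Real.cos (m * x)) (Set.Icc (-π) π) := by
    have h := hwint.bdd_mul (f := fun x => Real.cos (m * x))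
      (Continuous.aestronglyMeasurable (by continuity))
      (c := 1) (Filter.Eventually.of_forall fun x => by simpa [Real.norm_eq_abs] using Real.abs_cos_le_one ((m : ℝ) * x))
    exact h.congr (by filter_upwards with x using mul_comm _ _)
  have hsin : IntegrableOn (fun x => w x * Real.sin (m * x)) (Set.Icc (-π) π) := by
    have h := hwint.bdd_mul (f := fun x => Real.sin (m * x))
      (Continuous.aestronglyMeasurable (by continuity))
      (c := 1) (Filter.Eventually.of_forall fun x => by simpa [Real.norm_eq_abs] using Real.abs_sin_le_one ((m : ℝ) * x))
    exact h.congr (by filter_upwards with x using mul_comm _ _)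
  have hpt : ∀ x : ℝ, (w x : ℂ) * Complex.exp ((((m : ℝ) * x : ℝ)) * Complex.I)
      = ((w x * Real.cos (m * x) : ℝ) : ℂ) + ((w x * Real.sin (m * x) : ℝ) : ℂ) * Complex.I := by
    intro x
    rw [Complex.exp_mul_I, ← Complex.ofReal_cos, ← Complex.ofReal_sin]
    push_cast
    ring
  simp_rw [hpt]
  rw [integral_add, integral_mul_const, integral_ofReal'', integral_ofReal'']
  rotate_left
  · exact hcos.ofReal
  · exact (hsin.ofReal).mul_const Complex.I
  have h0 : (∫ x in Set.Icc (-π) π, w x * Real.sin (m * x)) = 0 := by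
    rw [integral_Icc_eq_integral_Ioc, ← intervalIntegral.integral_of_le hπ]
    exact aux_odd w hweven m
  rw [h0, integral_Icc_eq_integral_Ioc, ← intervalIntegral.integral_of_le hπ]
  simp

/-- Multi-dimensional TQFF: given, in each dimension `j`, a
one-dimensional quadrature rule with nodes in `[0, π)`, nonnegative weights and
trigonometric exactness of degree `2L − 1` with respect to an integrable even weight
`w_j`, extend symmetrically (a signed index is encoded as a pair `(i, s) : Fin L × Bool`
with node `ω_{i,j}` if `s` and `−ω_{i,j}` otherwise, and weight `a_{i,j}` either way).
For any set `S` of multi-indices containing exactly one member of each antipodal pair,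
the tensor-product rule `Σ_{i ∈ S} 2 a_i cos(ω_iᵀ k)` with `a_i = ∏_j (1/2) a_{i_j, j}`
integrates `cos(ωᵀ k)` exactly against `∏_j w_j` over `[−π, π]^d` whenever
`‖k‖_∞ ≤ 2L − 1`. -/
theorem multidim_trig_quadrature_exactness
    (d L : ℕ) (hd : 1 ≤ d) (hL : 1 ≤ L)
    (w : Fin d → ℝ → ℝ)
    (hwint : ∀ j, IntegrableOn (w j) (Set.Icc (-π) π))
    (hweven : ∀ j, ∀ x : ℝ, w j (-x) = w j x)
    (ω : Fin L → Fin d → ℝ)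
    (hmem : ∀ i j, ω i j ∈ Set.Ico 0 π)
    (a : Fin L → Fin d → ℝ)
    (ha : ∀ i j, 0 ≤ a i j)
    (hexact : ∀ j : Fin d, ∀ k : ℕ, k ≤ 2 * L - 1 →
      (∑ i : Fin L, a i j * Real.cos (k * ω i j))
        = ∫ x in (-π)..π, w j x * Real.cos (k * x))
    (S : Finset (Fin d → Fin L × Bool))
    (hS : ∀ v : Fin d → Fin L × Bool,
      v ∈ S ↔ (fun j => ((v j).1, !(v j).2)) ∉ S)
    (k : Fin d → ℕ) (hk : ∀ j, k j ≤ 2 * L - 1) :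
    (∑ v ∈ S, 2 * (∏ j : Fin d, (1 / 2) * a (v j).1 j) *
        Real.cos (∑ j : Fin d,
          (if (v j).2 then ω (v j).1 j else -(ω (v j).1 j)) * k j))
      = ∫ x : Fin d → ℝ in Set.univ.pi (fun _ : Fin d => Set.Icc (-π) π),
          (∏ j : Fin d, w j (x j)) * Real.cos (∑ j : Fin d, x j * k j) := by
  classical
  set c : Fin d → ℝ := fun j => ∫ x in (-π)..π, w j x * Real.cos (k j * x) with hc
  -- ### RHS
  set F : Fin d → ℝ → ℂ := fun j x => (w j x : ℂ) *
    Complex.exp ((((k j : ℝ) * x : ℝ)) * Complex.I) with hF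
  have hFint : ∀ j, IntegrableOn (F j) (Set.Icc (-π) π) := by
    intro j
    have h := ((hwint j).ofReal (𝕜 := ℂ)).bdd_mul
      (f := fun x : ℝ => Complex.exp ((((k j : ℝ) * x : ℝ)) * Complex.I))
      (Continuous.aestronglyMeasurable (by fun_prop))
      (c := 1) (Filter.Eventually.of_forall fun x => (Complex.norm_exp_ofReal_mul_I _).le)
    exact h.congr (by filter_upwards with x using mul_comm _ _)
  have hGint : ∀ j, Integrable ((Set.Icc (-π) π).indicator (F j)) := fun j =>
    (integrable_indicator_iff measurableSet_Icc).2 (hFint j)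
  have hindprod : ∀ x : Fin d → ℝ,
      (∏ j, (Set.Icc (-π) π).indicator (F j) (x j))
        = (Set.univ.pi fun _ : Fin d => Set.Icc (-π) π).indicator
            (fun y => ∏ j, F j (y j)) x := by
    intro x
    by_cases hx : x ∈ Set.univ.pi fun _ : Fin d => Set.Icc (-π) π
    · rw [Set.indicator_of_mem hx]
      exact Finset.prod_congr rfl fun j _ =>
        Set.indicator_of_mem (hx j (Set.mem_univ j)) _
    · rw [Set.indicator_of_notMem hx]
      have : ∃ j, x j ∉ Set.Icc (-π) π := by
        by_contra hcon
        push_neg at hcon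
        exact hx fun i _ => hcon i
      obtain ⟨j, hj⟩ := this
      exact Finset.prod_eq_zero (Finset.mem_univ j) (Set.indicator_of_notMem hj _)
  have hpiMeas : MeasurableSet (Set.univ.pi fun _ : Fin d => Set.Icc (-π) π) :=
    MeasurableSet.univ_pi fun _ => measurableSet_Icc
  have hkey : (∫ x : Fin d → ℝ in Set.univ.pi fun _ : Fin d => Set.Icc (-π) π,
      ∏ j, F j (x j)) = ((∏ j, c j : ℝ) : ℂ) := by
    rw [← integral_indicator hpiMeas]
    rw [show ((Set.univ.pi fun _ : Fin d => Set.Icc (-π) π).indicator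
        (fun y => ∏ j, F j (y j)))
        = fun x => ∏ j, (Set.Icc (-π) π).indicator (F j) (x j) from
      funext fun x => (hindprod x).symm]
    rw [MeasureTheory.integral_fintype_prod_volume_eq_prod
      (f := fun j => (Set.Icc (-π) π).indicator (F j)), Complex.ofReal_prod]
    refine Finset.prod_congr rfl fun j _ => ?_
    rw [integral_indicator measurableSet_Icc]
    exact aux_1d (w j) (hwint j) (k j) (hweven j)
  have hFprodInt : IntegrableOn (fun x : Fin d → ℝ => ∏ j, F j (x j))
      (Set.univ.pi fun _ : Fin d => Set.Icc (-π) π) := by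
    exact (integrable_indicator_iff hpiMeas).1
      ((Integrable.fintype_prod hGint).congr (Filter.Eventually.of_forall hindprod))
  have hre : ∀ x : Fin d → ℝ,
      (∏ j, F j (x j)).re = (∏ j, w j (x j)) * Real.cos (∑ j, x j * k j) := by
    intro x
    have hsum : (∑ j, ((((k j : ℝ) * x j : ℝ)) : ℂ) * Complex.I)
        = (((∑ j, x j * (k j : ℝ) : ℝ)) : ℂ) * Complex.I := by
      rw [← Finset.sum_mul, Complex.ofReal_sum]
      congr 1
      exact Finset.sum_congr rfl fun j _ => by push_cast; ring
    have h1 : ∏ j, F j (x j) = ((∏ j, w j (x j) : ℝ) : ℂ) *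
        Complex.exp ((((∑ j, x j * (k j : ℝ) : ℝ)) : ℂ) * Complex.I) := by
      rw [Finset.prod_mul_distrib, ← Complex.exp_sum, hsum, Complex.ofReal_prod]
    rw [h1, Complex.re_ofReal_mul, Complex.exp_ofReal_mul_I_re]
  have hRHS : (∫ x : Fin d → ℝ in Set.univ.pi (fun _ : Fin d => Set.Icc (-π) π),
      (∏ j : Fin d, w j (x j)) * Real.cos (∑ j : Fin d, x j * k j)) = ∏ j, c j := by
    have h2 : (∫ x : Fin d → ℝ in Set.univ.pi (fun _ : Fin d => Set.Icc (-π) π),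
        (∏ j : Fin d, w j (x j)) * Real.cos (∑ j : Fin d, x j * k j))
        = ∫ x : Fin d → ℝ in Set.univ.pi (fun _ : Fin d => Set.Icc (-π) π),
          (∏ j, F j (x j)).re :=
      integral_congr_ae (Filter.Eventually.of_forall fun x => (hre x).symm)
    have h3 := integral_re (𝕜 := ℂ) hFprodInt
    simp only [RCLike.re_to_complex] at h3
    rw [h2, h3, hkey, Complex.ofReal_re]
  -- ### LHS
  set N : (Fin d → Fin L × Bool) → (Fin d → Fin L × Bool) :=
    fun v j => ((v j).1, !(v j).2) with hN
  set f : (Fin d → Fin L × Bool) → ℝ := fun v =>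
    (∏ j, (1 / 2 : ℝ) * a (v j).1 j) * Real.cos (∑ j,
      (if (v j).2 then ω (v j).1 j else -(ω (v j).1 j)) * k j) with hf
  have hfN : ∀ v, f (N v) = f v := by
    intro v
    have harg : (∑ j, (if (N v j).2 then ω (N v j).1 j else -(ω (N v j).1 j)) * k j)
        = -(∑ j, (if (v j).2 then ω (v j).1 j else -(ω (v j).1 j)) * k j) := by
      rw [← Finset.sum_neg_distrib]
      refine Finset.sum_congr rfl fun j _ => ?_
      simp only [hN]
      cases (v j).2 <;> simp <;> ring
    simp only [hf]
    rw [harg, Real.cos_neg]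
  have hpair : (∑ v ∈ S, 2 * f v) = ∑ v : Fin d → Fin L × Bool, f v := by
    have h1 : (∑ v ∈ Sᶜ, f v) = ∑ v ∈ S, f v := by
      refine Finset.sum_nbij' (i := N) (j := N) ?_ ?_ ?_ ?_ ?_
      · intro v hv
        rw [Finset.mem_compl] at hv
        by_contra hcon
        exact hv ((hS v).mpr (by simpa [hN] using hcon))
      · intro v hv
        rw [Finset.mem_compl]
        exact (by simpa [hN] using (hS v).mp hv : N v ∉ S)
      · intro v _; funext j; simp [hN]
      · intro v _; funext j; simp [hN]
      · intro v _; exact (hfN v).symm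
    rw [← Finset.sum_add_sum_compl S f, h1, ← Finset.sum_add_distrib]
    exact Finset.sum_congr rfl fun v _ => by ring
  -- complex computation of the full sum
  set h : Fin d → (Fin L × Bool) → ℂ := fun j p =>
    (((1 / 2 : ℝ) * a p.1 j : ℝ) : ℂ) *
      Complex.exp ((((if p.2 then ω p.1 j else -(ω p.1 j)) * k j : ℝ) : ℂ) * Complex.I)
    with hh
  have hrev : ∀ v, f v = (∏ j, h j (v j)).re := by
    intro v
    have h1 : ∏ j, h j (v j)
        = ((∏ j, (1 / 2 : ℝ) * a (v j).1 j : ℝ) : ℂ) *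
          Complex.exp (((∑ j, (if (v j).2 then ω (v j).1 j else -(ω (v j).1 j)) * k j
            : ℝ) : ℂ) * Complex.I) := by
      rw [Finset.prod_mul_distrib, ← Complex.exp_sum, Complex.ofReal_prod]
      congr 1
      rw [← Finset.sum_mul, Complex.ofReal_sum]
    rw [h1, Complex.re_ofReal_mul, Complex.exp_ofReal_mul_I_re, hf]
  have hcol : ∀ j, (∑ p : Fin L × Bool, h j p) = ((c j : ℝ) : ℂ) := by
    intro j
    rw [Fintype.sum_prod_type]
    have h1 : ∀ i : Fin L, (∑ b : Bool, h j (i, b))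
        = ((a i j * Real.cos ((k j : ℝ) * ω i j) : ℝ) : ℂ) := by
      intro i
      rw [Fintype.sum_bool]
      simp only [hh]
      rw [Complex.exp_mul_I, Complex.exp_mul_I]
      push_cast
      rw [neg_mul, Complex.cos_neg, Complex.sin_neg,
        mul_comm ((k j : ℂ)) ((ω i j : ℝ) : ℂ)]
      ring
    rw [Finset.sum_congr rfl fun i _ => h1 i]
    rw [← Complex.ofReal_sum]
    norm_cast
    simp only [hc]
    exact hexact j (k j) (hk j)
  have hLHS : (∑ v : Fin d → Fin L × Bool, f v) = ∏ j, c j := by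
    have h1 : (∑ v : Fin d → Fin L × Bool, ∏ j, h j (v j))
        = ∏ j, ∑ p : Fin L × Bool, h j p := (Fintype.prod_sum h).symm
    have h2 : (∑ v : Fin d → Fin L × Bool, f v)
        = (∑ v : Fin d → Fin L × Bool, ∏ j, h j (v j)).re := by
      rw [Complex.re_sum]
      exact Finset.sum_congr rfl fun v _ => hrev v
    rw [h2, h1]
    have h3 : (∏ j, ∑ p : Fin L × Bool, h j p) = ((∏ j, c j : ℝ) : ℂ) := by
      rw [Complex.ofReal_prod]
      exact Finset.prod_congr rfl fun j _ => hcol j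
    rw [h3, Complex.ofReal_re]
  calc (∑ v ∈ S, 2 * (∏ j : Fin d, (1 / 2) * a (v j).1 j) *
        Real.cos (∑ j : Fin d,
          (if (v j).2 then ω (v j).1 j else -(ω (v j).1 j)) * k j))
      = ∑ v ∈ S, 2 * f v := Finset.sum_congr rfl fun v _ => by rw [hf]; ring
    _ = ∑ v : Fin d → Fin L × Bool, f v := hpair
    _ = ∏ j, c j := hLHS
    _ = _ := hRHS.symm
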